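/- For a nonnegative weight function φ on all transpositions of S_n, the weighted transposition distance from a single transposition (a b) to the identity satisfies d_φ((a b), e) ≤ 2·wt(p*) where p* is a minimum-weight path from a to b in the complete graph K_φ on [n] whose edge (i,j) has weight φ((i j)). Moreover, for a path p = (v_0 = a, v_1, ..., v_k = b), the transposition (a b) can be written as a product of 2k−1 transpositions of consecutive path vertices, of total weight 2·wt(p) − φ((v_{k−1} v_k)). -/

import Mathlib

open Equiv Finset

/-- The adjacent transposition swapping positions `i` and `i+1` (0-indexed);
identity if out of range. -/
def adjSwap (n i : ℕ) : Equiv.Perm (Fin n) :=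
  if h : i + 1 < n then Equiv.swap ⟨i, Nat.lt_of_succ_lt h⟩ ⟨i + 1, h⟩ else 1

/-- `ω` is between `π` and `σ`: on every pair `{a,b}`, `ω` agrees with `π` or with `σ`. -/
def Between {n : ℕ} (π ω σ : Equiv.Perm (Fin n)) : Prop :=
  ∀ a b : Fin n, (π⁻¹ a < π⁻¹ b ↔ ω⁻¹ a < ω⁻¹ b) ∨ (σ⁻¹ a < σ⁻¹ b ↔ ω⁻¹ a < ω⁻¹ b)

/-- Kendall tau distance: minimum number of adjacent transpositions transforming `π` into `σ`. -/
noncomputable def kendall {n : ℕ} (π σ : Equiv.Perm (Fin n)) : ℕ :=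
  sInf {s | ∃ l : List ℕ, (∀ i ∈ l, i + 1 < n) ∧
    σ = π * (l.map (adjSwap n)).prod ∧ l.length = s}

/-- The set of inversions between `π` and `σ` (each unordered pair `{i,j}` of disagreement
is recorded as the ordered pair `(i,j)` with `i` ranked before `j` by `π`). -/
def invSet {n : ℕ} (π σ : Equiv.Perm (Fin n)) : Finset (Fin n × Fin n) :=
  Finset.univ.filter fun p => π⁻¹ p.1 < π⁻¹ p.2 ∧ σ⁻¹ p.2 < σ⁻¹ p.1

/-- Elements `j` on whose relative order with `i` the permutations `π` and `σ` disagree. -/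
def invWith {n : ℕ} (π σ : Equiv.Perm (Fin n)) (i : Fin n) : Finset (Fin n) :=
  Finset.univ.filter fun j => ¬(π⁻¹ i < π⁻¹ j ↔ σ⁻¹ i < σ⁻¹ j)

/-- Weighted Kendall distance for weight function `φ` on adjacent transpositions
(`φ h` is the weight of swapping positions `h, h+1`, 0-indexed). -/
noncomputable def wKendall {n : ℕ} (φ : ℕ → ℝ) (π σ : Equiv.Perm (Fin n)) : ℝ :=
  sInf {w | ∃ l : List ℕ, (∀ i ∈ l, i + 1 < n) ∧
    σ = π * (l.map (adjSwap n)).prod ∧ (l.map φ).sum = w}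

/-- `w(k:l)`: sum of adjacent-transposition weights between positions `min k l` and `max k l - 1`. -/
def wsum (φ : ℕ → ℝ) (k l : ℕ) : ℝ := ∑ h ∈ Finset.Ico (min k l) (max k l), φ h

/-- The generalized (weighted) Spearman footrule `D_φ`. -/
noncomputable def DKendall {n : ℕ} (φ : ℕ → ℝ) (π σ : Equiv.Perm (Fin n)) : ℝ :=
  ∑ i : Fin n, wsum φ ((π⁻¹ i : Fin n) : ℕ) ((σ⁻¹ i : Fin n) : ℕ)

/-- Weighted transposition distance with weight function `φ` on transpositions. -/
noncomputable def wTrans {n : ℕ} (φ : Fin n → Fin n → ℝ) (π σ : Equiv.Perm (Fin n)) : ℝ :=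
  sInf {w | ∃ l : List (Fin n × Fin n), (∀ p ∈ l, p.1 ≠ p.2) ∧
    σ = π * (l.map fun p => Equiv.swap p.1 p.2).prod ∧
    (l.map fun p => φ p.1 p.2).sum = w}

/-- Weight of a path (as a list of vertices) in the complete graph `K_φ`. -/
def pathWt {n : ℕ} (φ : Fin n → Fin n → ℝ) (p : List (Fin n)) : ℝ :=
  ((p.zip p.tail).map fun q => φ q.1 q.2).sum

/-- `p` is a path from `a` to `b` (consecutive vertices distinct). -/
def IsPath {n : ℕ} (p : List (Fin n)) (a b : Fin n) : Prop :=
  p.head? = some a ∧ p.getLast? = some b ∧ p.Chain' (· ≠ ·)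

/-- Minimum weight of a path from `a` to `b` in `K_φ`. -/
noncomputable def minPathWt {n : ℕ} (φ : Fin n → Fin n → ℝ) (a b : Fin n) : ℝ :=
  sInf {w | ∃ p : List (Fin n), IsPath p a b ∧ pathWt φ p = w}

/-- The footrule-type lower/upper bounding function `D_φ` for transposition weights. -/
noncomputable def DTrans {n : ℕ} (φ : Fin n → Fin n → ℝ) (π σ : Equiv.Perm (Fin n)) : ℝ :=
  ∑ i : Fin n, minPathWt φ (π⁻¹ i) (σ⁻¹ i)

/- ------------------- auxiliary lemmas ------------------- -/

private lemma good_id {α : Type*} [DecidableEq α] {v0 v1 b : α}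
    (h0 : v0 ≠ b) (h1 : v1 ≠ b) :
    Equiv.swap v0 v1 * (Equiv.swap v1 b * Equiv.swap v0 v1) = Equiv.swap v0 b := by
  have h := Equiv.swap_apply_apply (Equiv.swap v0 v1) v1 b
  rw [Equiv.swap_apply_right, Equiv.swap_apply_of_ne_of_ne h0.symm h1.symm,
    Equiv.swap_inv, mul_assoc] at h
  exact h.symm

private lemma bad_id {α : Type*} [DecidableEq α] {v0 v1 v2 : α}
    (h01 : v0 ≠ v1) (h12 : v1 ≠ v2) :
    Equiv.swap v1 v2 * (Equiv.swap v0 v1 * (Equiv.swap v1 v2 *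
      (Equiv.swap v0 v1 * Equiv.swap v2 v1))) = Equiv.swap v0 v1 := by
  rw [Equiv.swap_comm v2 v1]
  by_cases h02 : v0 = v2
  · subst h02
    rw [Equiv.swap_comm v1 v0]
    simp
  · have e1 : Equiv.swap v1 v2 * Equiv.swap v0 v1 * Equiv.swap v1 v2 = Equiv.swap v0 v2 := by
      have h := Equiv.swap_apply_apply (Equiv.swap v1 v2) v0 v1
      rw [Equiv.swap_apply_of_ne_of_ne h01 h02, Equiv.swap_apply_left, Equiv.swap_inv] at h
      exact h.symm
    have e2 : Equiv.swap v0 v1 * Equiv.swap v1 v2 * Equiv.swap v0 v1 = Equiv.swap v0 v2 := by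
      have h := Equiv.swap_apply_apply (Equiv.swap v0 v1) v1 v2
      rw [Equiv.swap_apply_right, Equiv.swap_apply_of_ne_of_ne (Ne.symm h02) (Ne.symm h12),
        Equiv.swap_inv] at h
      exact h.symm
    have key : Equiv.swap v1 v2 * Equiv.swap v0 v1 * Equiv.swap v1 v2 *
        (Equiv.swap v0 v1 * Equiv.swap v1 v2) = Equiv.swap v0 v1 := by
      rw [e1, ← e2]
      simp only [mul_assoc, Equiv.swap_mul_self_mul, Equiv.swap_mul_self, mul_one]
    simpa only [mul_assoc] using key

private lemma pathWt_cons {n : ℕ} (φ : Fin n → Fin n → ℝ) (x y : Fin n) (T : List (Fin n)) :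
    pathWt φ (x :: y :: T) = φ x y + pathWt φ (y :: T) := by
  simp [pathWt]

/-- The key construction lemma. -/
private lemma key {n : ℕ} (φ : Fin n → Fin n → ℝ) :
    ∀ (m : ℕ) (p : List (Fin n)) (a b : Fin n), p.length ≤ m → a ≠ b → IsPath p a b →
      2 ≤ p.length →
    ∃ l : List (Fin n × Fin n),
      (∀ q ∈ l, q ∈ p.zip p.tail) ∧
      (∀ q ∈ l, q.1 ≠ q.2) ∧
      l.length = 2 * (p.length - 1) - 1 ∧
      Equiv.swap a b = (l.map fun q => Equiv.swap q.1 q.2).prod ∧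
      ∀ e : Fin n × Fin n, (p.zip p.tail).getLast? = some e →
        (l.map fun q => φ q.1 q.2).sum = 2 * pathWt φ p - φ e.1 e.2 := by
  intro m
  induction m with
  | zero => intro p a b hm _ _ hlen; omega
  | succ m ih =>
    intro p a b hm hab hp hlen
    obtain ⟨h1, h2, h3⟩ := hp
    rcases p with _ | ⟨v0, _ | ⟨v1, T⟩⟩
    · simp at hlen
    · simp at hlen
    -- p = v0 :: v1 :: T
    have hv0 : a = v0 := (by simpa using h1 : v0 = a).symm
    subst hv0
    simp only [List.Chain', List.isChain_cons_cons] at h3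
    obtain ⟨h01, h3⟩ := h3
    rcases T with _ | ⟨v2, r⟩
    · -- base case p = [a, v1]
      have hb : b = v1 := (by simpa using h2 : v1 = b).symm
      subst hb
      refine ⟨[(a, b)], by simp, by simpa using h01, by simp, by simp, ?_⟩
      intro e he
      simp only [List.tail_cons, List.zip_cons_cons, List.zip_nil_right,
        List.getLast?_singleton, Option.some.injEq] at he
      subst he
      simp only [pathWt, List.tail_cons, List.zip_cons_cons, List.zip_nil_right,
        List.map_cons, List.map_nil, List.sum_cons, List.sum_nil]
      ring
    · -- p = a :: v1 :: v2 :: r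
      rw [List.isChain_cons_cons] at h3
      obtain ⟨h12, h3⟩ := h3
      have h2' : (v2 :: r).getLast? = some b := by
        simpa only [List.getLast?_cons_cons] using h2
      by_cases hb : b = v1
      · -- bad case
        subst hb
        -- r ≠ []
        rcases r with _ | ⟨w, r'⟩
        · exact absurd (by simpa using h2') (Ne.symm h12)
        -- t'' = v2 :: w :: r'
        have hpath : IsPath (v2 :: w :: r') v2 b := ⟨rfl, h2', h3⟩
        obtain ⟨N, hNmem, hNne, hNlen, hNprod, hNw⟩ :=
          ih (v2 :: w :: r') v2 b (by simp at hm ⊢; omega) (Ne.symm h12) hpath (by simp)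
        refine ⟨(b, v2) :: (a, b) :: (b, v2) :: (a, b) :: N, ?_, ?_, ?_, ?_, ?_⟩
        · intro q hq
          simp only [List.mem_cons] at hq
          rcases hq with rfl | rfl | rfl | rfl | hq
          · simp
          · simp
          · simp
          · simp
          · have := hNmem q hq
            simp only [List.zip_cons_cons, List.tail_cons, List.mem_cons] at this ⊢
            tauto
        · intro q hq
          simp only [List.mem_cons] at hq
          rcases hq with rfl | rfl | rfl | rfl | hq
          · exact h12
          · exact h01
          · exact h12
          · exact h01
          · exact hNne q hq
        · simp only [List.length_cons, List.length_nil] at hNlen ⊢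
          omega
        · simp only [List.map_cons, List.prod_cons, ← hNprod]
          exact (bad_id h01 h12).symm
        · intro e he
          have he' : ((v2 :: w :: r').zip (v2 :: w :: r').tail).getLast? = some e := by
            simpa only [List.zip_cons_cons, List.tail_cons, List.getLast?_cons_cons] using he
          have hNw' := hNw e he'
          simp only [List.map_cons, List.sum_cons, hNw', pathWt_cons]
          ring
      · -- good case : b ≠ v1
        have hpath : IsPath (v1 :: v2 :: r) v1 b := ⟨rfl, by simpa using h2, by
          simp only [List.Chain', List.isChain_cons_cons]; exact ⟨h12, h3⟩⟩
        obtain ⟨N, hNmem, hNne, hNlen, hNprod, hNw⟩ :=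
          ih (v1 :: v2 :: r) v1 b (by simp at hm ⊢; omega) (Ne.symm hb) hpath (by simp)
        refine ⟨(a, v1) :: (N ++ [(a, v1)]), ?_, ?_, ?_, ?_, ?_⟩
        · intro q hq
          simp only [List.mem_cons, List.mem_append, List.mem_singleton] at hq
          rcases hq with rfl | hq | rfl | h
          · simp
          · have := hNmem q hq
            simp only [List.zip_cons_cons, List.tail_cons, List.mem_cons] at this ⊢
            tauto
          · simp
          · exact absurd h List.not_mem_nil
        · intro q hq
          simp only [List.mem_cons, List.mem_append, List.mem_singleton] at hq
          rcases hq with rfl | hq | rfl | h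
          · exact h01
          · exact hNne q hq
          · exact h01
          · exact absurd h List.not_mem_nil
        · simp only [List.length_cons, List.length_append, List.length_singleton,
            List.length_nil] at hNlen ⊢
          omega
        · simp only [List.map_cons, List.map_append, List.prod_cons, List.prod_append,
            List.map_cons, List.map_nil, List.prod_cons, List.prod_nil, mul_one, ← hNprod]
          exact (good_id hab (Ne.symm hb)).symm
        · intro e he
          have he' : ((v1 :: v2 :: r).zip (v1 :: v2 :: r).tail).getLast? = some e := by
            simpa only [List.zip_cons_cons, List.tail_cons, List.getLast?_cons_cons] using he
          have hNw' := hNw e he'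
          simp only [List.map_cons, List.map_append, List.sum_cons, List.sum_append,
            List.map_cons, List.map_nil, List.sum_cons, List.sum_nil, add_zero, hNw',
            pathWt_cons]
          ring

theorem stmt12 (n : ℕ) (φ : Fin n → Fin n → ℝ)
    (hφ0 : ∀ a b, 0 ≤ φ a b) (hsymm : ∀ a b, φ a b = φ b a)
    (a b : Fin n) (hab : a ≠ b) :
    wTrans φ (Equiv.swap a b) 1 ≤ 2 * minPathWt φ a b ∧
    ∀ p : List (Fin n), IsPath p a b → 2 ≤ p.length →
      ∃ l : List (Fin n × Fin n),
        (∀ q ∈ l, q ∈ p.zip p.tail ∨ (q.2, q.1) ∈ p.zip p.tail) ∧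
        l.length = 2 * (p.length - 1) - 1 ∧
        Equiv.swap a b = (l.map fun q => Equiv.swap q.1 q.2).prod ∧
        ∀ e : Fin n × Fin n, (p.zip p.tail).getLast? = some e →
          (l.map fun q => φ q.1 q.2).sum = 2 * pathWt φ p - φ e.1 e.2 := by
  constructor
  · -- wTrans ≤ 2 * minPathWt
    have hBdd : BddBelow {w | ∃ l : List (Fin n × Fin n), (∀ p ∈ l, p.1 ≠ p.2) ∧
        (1 : Equiv.Perm (Fin n)) = Equiv.swap a b * (l.map fun p => Equiv.swap p.1 p.2).prod ∧
        (l.map fun p => φ p.1 p.2).sum = w} := by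
      refine ⟨0, fun w hw => ?_⟩
      obtain ⟨l, -, -, rfl⟩ := hw
      apply List.sum_nonneg
      intro x hx
      obtain ⟨q, -, rfl⟩ := List.mem_map.mp hx
      exact hφ0 _ _
    have hSne : ∃ w : ℝ, ∃ p : List (Fin n), IsPath p a b ∧ pathWt φ p = w := by
      refine ⟨pathWt φ [a, b], [a, b], ⟨rfl, rfl, ?_⟩, rfl⟩
      exact List.isChain_cons_cons.mpr ⟨hab, List.isChain_singleton b⟩
    have hmain : ∀ w ∈ {w | ∃ p : List (Fin n), IsPath p a b ∧ pathWt φ p = w},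
        wTrans φ (Equiv.swap a b) 1 / 2 ≤ w := by
      intro w hw
      obtain ⟨p, hp, rfl⟩ := hw
      have hlen : 2 ≤ p.length := by
        obtain ⟨hh1, hh2, -⟩ := hp
        rcases p with _ | ⟨x, _ | ⟨y, T⟩⟩
        · simp at hh1
        · exact absurd hab (by
            have hx : x = a := by simpa using hh1
            have hy : x = b := by simpa using hh2
            rw [← hx, ← hy]
            simp)
        · simp
      obtain ⟨l, hmem, hne, hlenl, hprod, hwt⟩ := key φ p.length p a b le_rfl hab hp hlen
      obtain ⟨e, he⟩ : ∃ e, (p.zip p.tail).getLast? = some e := by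
        rcases p with _ | ⟨x, _ | ⟨y, T⟩⟩
        · simp at hlen
        · simp at hlen
        · rcases h : ((x :: y :: T).zip (x :: y :: T).tail).getLast? with _ | e
          · rw [List.getLast?_eq_none_iff] at h
            simp [List.zip_cons_cons] at h
          · exact ⟨e, rfl⟩
      have hin : (l.map fun q => φ q.1 q.2).sum ∈ {w | ∃ l : List (Fin n × Fin n),
          (∀ p ∈ l, p.1 ≠ p.2) ∧
          (1 : Equiv.Perm (Fin n)) = Equiv.swap a b * (l.map fun p => Equiv.swap p.1 p.2).prod ∧
          (l.map fun p => φ p.1 p.2).sum = w} := by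
        refine ⟨l, hne, ?_, rfl⟩
        rw [← hprod]
        simp
      have hle : wTrans φ (Equiv.swap a b) 1 ≤ (l.map fun q => φ q.1 q.2).sum :=
        csInf_le hBdd hin
      have := hwt e he
      have hφe : 0 ≤ φ e.1 e.2 := hφ0 _ _
      rw [this] at hle
      linarith
    have : wTrans φ (Equiv.swap a b) 1 / 2 ≤ minPathWt φ a b := by
      apply le_csInf
      · obtain ⟨w, hw⟩ := hSne
        exact ⟨w, hw⟩
      · exact hmain
    linarith
  · -- the explicit construction
    intro p hp hlen
    obtain ⟨l, hmem, hne, hlenl, hprod, hwt⟩ := key φ p.length p a b le_rfl hab hp hlen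
    exact ⟨l, fun q hq => Or.inl (hmem q hq), hlenl, hprod, hwt⟩
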